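/- arXiv:1904.07675 — 3 statements merged into one kernel-verified Lean document; each statement's English description precedes it below -/
import Mathlib

section
/- Let q be a real number with 0 < q < 1/2 and p = 1 − q, and let C_n = (2n)!/(n!·(n+1)!) denote the n-th Catalan number. Then the series ∑_{n=0}^∞ p·(pq)^n·C_n converges and equals 1. -/
open scoped BigOperators

/-- The `n`-th Catalan number `C_n = (2n)! / (n! * (n+1)!)`, as a real number. -/
noncomputable def catalanC (n : ℕ) : ℝ :=
  (Nat.factorial (2 * n) : ℝ) / ((Nat.factorial n : ℝ) * (Nat.factorial (n + 1) : ℝ))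

lemma catalanC_eq_cast (n : ℕ) : catalanC n = (catalan n : ℝ) := by
  have h1 : (n + 1) * catalan n = Nat.centralBinom n :=
    succ_mul_catalan_eq_centralBinom n
  have h2 : Nat.centralBinom n * n.factorial * n.factorial = (2 * n).factorial := by
    have h := Nat.choose_mul_factorial_mul_factorial (show n ≤ 2 * n by omega)
    rwa [show 2 * n - n = n by omega] at h
  have h1' : ((n : ℝ) + 1) * (catalan n : ℝ) = (Nat.centralBinom n : ℝ) := by
    exact_mod_cast congrArg (Nat.cast : ℕ → ℝ) h1
  have h2' : (Nat.centralBinom n : ℝ) * (n.factorial : ℝ) * (n.factorial : ℝ)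
      = ((2 * n).factorial : ℝ) := by exact_mod_cast congrArg (Nat.cast : ℕ → ℝ) h2
  have hfacpos : (0 : ℝ) < (n.factorial : ℝ) := by exact_mod_cast n.factorial_pos
  have hfac1 : ((n + 1).factorial : ℝ) = ((n : ℝ) + 1) * (n.factorial : ℝ) := by
    rw [Nat.factorial_succ]; push_cast; ring
  have hn1 : (0 : ℝ) < (n : ℝ) + 1 := by positivity
  rw [catalanC, hfac1, ← h2', ← h1']
  field_simp

lemma catalanC_nonneg (n : ℕ) : 0 ≤ catalanC n := by
  rw [catalanC_eq_cast]; positivity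

lemma catalanC_le_four_pow (n : ℕ) : catalanC n ≤ 4 ^ n := by
  rw [catalanC_eq_cast]
  have h1 : catalan n ≤ Nat.centralBinom n := by
    calc catalan n ≤ (n + 1) * catalan n := Nat.le_mul_of_pos_left _ (by omega)
    _ = Nat.centralBinom n := succ_mul_catalan_eq_centralBinom n
  have h2 : Nat.centralBinom n ≤ 4 ^ n := by
    calc Nat.centralBinom n = (2 * n).choose n := rfl
    _ ≤ ∑ m ∈ Finset.range (2 * n + 1), (2 * n).choose m :=
        Finset.single_le_sum (fun i _ => Nat.zero_le _) (Finset.mem_range.mpr (by omega))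
    _ = 2 ^ (2 * n) := Nat.sum_range_choose (2 * n)
    _ = 4 ^ n := by rw [pow_mul]; norm_num
  calc (catalan n : ℝ) ≤ (Nat.centralBinom n : ℝ) := by exact_mod_cast h1
  _ ≤ ((4 : ℕ) ^ n : ℝ) := by exact_mod_cast h2
  _ = 4 ^ n := by push_cast; ring

lemma catalan_partial_sum_le (x : ℝ) (hx0 : 0 ≤ x) (hx : x ≤ 1 / 4) (N : ℕ) :
    ∑ n ∈ Finset.range N, catalanC n * x ^ n + 2 * (Nat.centralBinom N : ℝ) * x ^ N ≤ 2 := by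
  induction N with
  | zero => simp [Nat.centralBinom]
  | succ N ih =>
    rw [Finset.sum_range_succ]
    have hrec : ((N : ℝ) + 1) * (Nat.centralBinom (N + 1) : ℝ)
        = 2 * (2 * (N : ℝ) + 1) * (Nat.centralBinom N : ℝ) := by
      exact_mod_cast congrArg (Nat.cast : ℕ → ℝ) (Nat.succ_mul_centralBinom_succ N)
    have hcat : ((N : ℝ) + 1) * catalanC N = (Nat.centralBinom N : ℝ) := by
      rw [catalanC_eq_cast]
      exact_mod_cast congrArg (Nat.cast : ℕ → ℝ) (succ_mul_catalan_eq_centralBinom N)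
    have hxN : (0 : ℝ) ≤ x ^ N := by positivity
    have hN1 : (0 : ℝ) < (N : ℝ) + 1 := by positivity
    have hxpow : x ^ (N + 1) ≤ (1 / 4) * x ^ N := by
      rw [pow_succ, mul_comm]
      exact mul_le_mul_of_nonneg_right hx hxN
    have h3 : 2 * (Nat.centralBinom (N + 1) : ℝ) * x ^ (N + 1)
        ≤ 2 * (Nat.centralBinom (N + 1) : ℝ) * ((1 / 4) * x ^ N) :=
      mul_le_mul_of_nonneg_left hxpow (by positivity)
    have h4 : catalanC N * x ^ N + 2 * (Nat.centralBinom (N + 1) : ℝ) * ((1 / 4) * x ^ N)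
        = 2 * (Nat.centralBinom N : ℝ) * x ^ N := by
      have h4' : ((N : ℝ) + 1) *
            (catalanC N * x ^ N + 2 * (Nat.centralBinom (N + 1) : ℝ) * ((1 / 4) * x ^ N))
          = ((N : ℝ) + 1) * (2 * (Nat.centralBinom N : ℝ) * x ^ N) := by
        linear_combination x ^ N * hcat + (x ^ N / 2) * hrec
      exact mul_left_cancel₀ hN1.ne' h4'
    linarith

/-- For `0 < q < 1/2` and `p = 1 - q`, the series `∑ p (pq)^n C_n` converges and equals `1`. -/
theorem catalan_sum_one (q p : ℝ) (hq0 : 0 < q) (hq : q < 1 / 2) (hp : p = 1 - q) :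
    HasSum (fun n : ℕ => p * (p * q) ^ n * catalanC n) 1 := by
  have hp0 : 0 < p := by rw [hp]; linarith
  set x : ℝ := p * q with hxdef
  have hx0 : 0 < x := by positivity
  have hx14 : x < 1 / 4 := by
    have h : 1 / 4 - x = (1 / 2 - q) ^ 2 := by rw [hxdef, hp]; ring
    nlinarith [sq_nonneg (1 / 2 - q), hq]
  -- summability
  have hterm_le : ∀ n, catalanC n * x ^ n ≤ (4 * x) ^ n := fun n => by
    have h : (4 * x) ^ n = 4 ^ n * x ^ n := mul_pow 4 x n
    rw [h]
    exact mul_le_mul_of_nonneg_right (catalanC_le_four_pow n) (by positivity)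
  have hterm_nonneg : ∀ n, 0 ≤ catalanC n * x ^ n := fun n => by
    have := catalanC_nonneg n; positivity
  have hsumm : Summable (fun n : ℕ => catalanC n * x ^ n) := by
    apply Summable.of_nonneg_of_le hterm_nonneg hterm_le
    exact summable_geometric_of_lt_one (by positivity) (by linarith)
  set f : ℝ := ∑' n, catalanC n * x ^ n with hfdef
  -- f ≤ 2
  have hf_le_two : f ≤ 2 := by
    apply Real.tsum_le_of_sum_range_le hterm_nonneg
    intro N
    have h := catalan_partial_sum_le x hx0.le (by linarith) N
    have hcb : (0 : ℝ) ≤ 2 * (Nat.centralBinom N : ℝ) * x ^ N := by positivity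
    linarith
  have hf_nonneg : 0 ≤ f := tsum_nonneg hterm_nonneg
  -- Cauchy product: f * f = ∑' n, catalanC (n+1) * x ^ n
  have habs : Summable (fun n : ℕ => ‖catalanC n * x ^ n‖) := by
    simpa [Real.norm_of_nonneg (hterm_nonneg _)] using hsumm
  have hcauchy : f * f = ∑' n : ℕ, catalanC (n + 1) * x ^ n := by
    rw [hfdef, tsum_mul_tsum_eq_tsum_sum_range_of_summable_norm habs habs]
    congr 1
    funext n
    have hsum_eq : ∑ k ∈ Finset.range (n + 1), catalanC k * x ^ k * (catalanC (n - k) * x ^ (n - k))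
        = (∑ k ∈ Finset.range (n + 1), catalanC k * catalanC (n - k)) * x ^ n := by
      rw [Finset.sum_mul]
      apply Finset.sum_congr rfl
      intro k hk
      have hkn : k ≤ n := Nat.lt_succ_iff.mp (Finset.mem_range.mp hk)
      have hpow : x ^ k * x ^ (n - k) = x ^ n := by
        rw [← pow_add]; congr 1; omega
      calc catalanC k * x ^ k * (catalanC (n - k) * x ^ (n - k))
          = catalanC k * catalanC (n - k) * (x ^ k * x ^ (n - k)) := by ring
        _ = catalanC k * catalanC (n - k) * x ^ n := by rw [hpow]
    rw [hsum_eq]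
    have hN : catalan (n + 1) = ∑ k ∈ Finset.range (n + 1), catalan k * catalan (n - k) := by
      rw [catalan_succ',
        Finset.Nat.sum_antidiagonal_eq_sum_range_succ (fun a b => catalan a * catalan b) n]
    have hrec : catalanC (n + 1) = ∑ k ∈ Finset.range (n + 1), catalanC k * catalanC (n - k) := by
      simp only [catalanC_eq_cast]
      exact_mod_cast congrArg (Nat.cast : ℕ → ℝ) hN
    rw [hrec]
  -- shift: x * (f * f) = f - 1
  have hshift : x * (f * f) = f - 1 := by
    rw [hcauchy]
    have h1 : x * ∑' n : ℕ, catalanC (n + 1) * x ^ n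
        = ∑' n : ℕ, catalanC (n + 1) * x ^ (n + 1) := by
      rw [← tsum_mul_left]
      congr 1; funext n; rw [pow_succ]; ring
    rw [h1]
    have h2 : f = catalanC 0 * x ^ 0 + ∑' n : ℕ, catalanC (n + 1) * x ^ (n + 1) :=
      Summable.tsum_eq_zero_add hsumm
    have h0 : catalanC 0 * x ^ 0 = 1 := by simp [catalanC_eq_cast]
    rw [h2, h0]; ring
  -- solve quadratic: (p*f - 1) * (q*f - 1) = 0
  have hquad : (p * f - 1) * (q * f - 1) = 0 := by
    have hpq : p + q = 1 := by rw [hp]; ring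
    have hq2 : p * q * (f * f) - f + 1 = 0 := by
      rw [← hxdef]; linarith [hshift]
    nlinarith [hq2, hpq]
  have hqf : q * f - 1 < 0 := by nlinarith
  have hpf : p * f = 1 := by
    rcases mul_eq_zero.mp hquad with h | h
    · linarith
    · linarith
  -- conclude
  have hfinal : HasSum (fun n : ℕ => p * (catalanC n * x ^ n)) (p * f) :=
    hsumm.hasSum.mul_left p
  rw [hpf] at hfinal
  have hfun : (fun n : ℕ => p * x ^ n * catalanC n)
      = fun n : ℕ => p * (catalanC n * x ^ n) := by
    funext n; ring
  rw [hfun]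
  exact hfinal
end

section
/- Let q be a real number with 0 < q < 1/2 and p = 1 − q, and let C_n = (2n)!/(n!·(n+1)!) denote the n-th Catalan number. Then the series ∑_{n=0}^∞ n·p·(pq)^n·C_n converges and equals q/(p − q). -/
open scoped BigOperators

open Finset


lemma catalanC_eq' (n : ℕ) :
    ((Nat.factorial (2 * n) : ℝ) / ((Nat.factorial n : ℝ) * (Nat.factorial (n + 1) : ℝ)))
      = (catalan n : ℝ) := by
  have h1 : ((2*n).choose n : ℝ) * (Nat.factorial n) * (Nat.factorial n) = Nat.factorial (2*n) := by
    have := Nat.choose_mul_factorial_mul_factorial (Nat.le_mul_of_pos_left n (by norm_num) : n ≤ 2*n)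
    have h2 : 2*n - n = n := by omega
    rw [h2] at this
    exact_mod_cast congrArg (Nat.cast : ℕ → ℝ) this
  have h2 : ((n:ℝ)+1) * (catalan n : ℝ) = ((2*n).choose n : ℝ) := by
    exact_mod_cast congrArg (Nat.cast : ℕ → ℝ) ((Nat.centralBinom_eq_two_mul_choose n ▸ succ_mul_catalan_eq_centralBinom n))
  have hn : (Nat.factorial n : ℝ) ≠ 0 := Nat.cast_ne_zero.2 (Nat.factorial_ne_zero n)
  have hn1 : ((n:ℝ)+1) ≠ 0 := by positivity
  rw [Nat.factorial_succ, ← h1, ← h2]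
  push_cast
  field_simp

lemma catalan_le_four_pow (n : ℕ) : (catalan n : ℝ) ≤ 4 ^ n := by
  have h1 : catalan n ≤ (2*n).choose n := by
    calc catalan n ≤ (n+1) * catalan n := Nat.le_mul_of_pos_left _ (by omega)
      _ = n.centralBinom := succ_mul_catalan_eq_centralBinom n
      _ = (2*n).choose n := Nat.centralBinom_eq_two_mul_choose n
  have h2 : (2*n).choose n ≤ 4 ^ n := by
    calc (2*n).choose n ≤ ∑ i ∈ range (2*n+1), (2*n).choose i :=
          Finset.single_le_sum (fun i _ => Nat.zero_le _) (by simp; omega)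
      _ = 2 ^ (2*n) := Nat.sum_range_choose (2*n)
      _ = 4 ^ n := by rw [pow_mul]; norm_num
  exact_mod_cast h1.trans h2

lemma catalan_summable {z : ℝ} (hz : |z| < 1/4) :
    Summable (fun n => (catalan n : ℝ) * z ^ n) := by
  have h4 : (0:ℝ) ≤ 4 * |z| := by positivity
  have h4' : 4 * |z| < 1 := by linarith
  apply Summable.of_norm
  apply Summable.of_nonneg_of_le (fun n => norm_nonneg _) (fun n => ?_)
    (summable_geometric_of_lt_one h4 h4')
  have : ‖(catalan n : ℝ) * z ^ n‖ = (catalan n : ℝ) * |z| ^ n := by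
    rw [norm_mul, norm_pow]
    simp [Nat.abs_cast]
  rw [this, mul_pow]
  exact mul_le_mul_of_nonneg_right (catalan_le_four_pow n) (by positivity)

lemma cb_rec (n : ℕ) : (2*(n+1)).choose (n+1) + 2 * catalan n = 4 * ((2*n).choose n) := by
  have h1 := Nat.succ_mul_centralBinom_succ n
  have h2 := succ_mul_catalan_eq_centralBinom n
  have key : (n+1) * ((2*(n+1)).choose (n+1) + 2 * catalan n) = (n+1) * (4 * ((2*n).choose n)) := by
    rw [Nat.mul_add]
    rw [show (2*(n+1)).choose (n+1) = (n+1).centralBinom from (Nat.centralBinom_eq_two_mul_choose _).symm]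
    rw [show (2*n).choose n = n.centralBinom from (Nat.centralBinom_eq_two_mul_choose _).symm]
    calc (n+1) * (n+1).centralBinom + (n+1) * (2 * catalan n)
        = 2 * (2*n+1) * n.centralBinom + 2 * ((n+1) * catalan n) := by rw [h1]; ring
      _ = 2 * (2*n+1) * n.centralBinom + 2 * n.centralBinom := by rw [h2]
      _ = (n+1) * (4 * n.centralBinom) := by ring
  exact Nat.eq_of_mul_eq_mul_left (by omega) key

lemma catalan_partial_sum (N : ℕ) :
    ∑ n ∈ range N, (catalan n : ℝ) * (1/4) ^ n = 2 - 2 * ((2*N).choose N) / 4 ^ N := by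
  induction N with
  | zero => simp
  | succ N ih =>
    rw [Finset.sum_range_succ, ih]
    have hrec : ((2*(N+1)).choose (N+1) : ℝ) + 2 * (catalan N : ℝ) = 4 * ((2*N).choose N : ℝ) := by
      exact_mod_cast congrArg (Nat.cast : ℕ → ℝ) (cb_rec N)
    have h4 : (4:ℝ) ^ N ≠ 0 := by positivity
    simp only [one_div, inv_pow]
    linear_combination (2 / 4 ^ (N+1)) * hrec

lemma catalan_tsum_abs_le {z : ℝ} (hz : |z| < 1/4) :
    |∑' n, (catalan n : ℝ) * z ^ n| ≤ 2 := by
  have hnorm : Summable (fun n => ‖(catalan n : ℝ) * z ^ n‖) := (catalan_summable hz).abs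
  calc |∑' n, (catalan n : ℝ) * z ^ n| ≤ ∑' n, ‖(catalan n : ℝ) * z ^ n‖ :=
        norm_tsum_le_tsum_norm hnorm
    _ ≤ 2 := by
        apply Real.tsum_le_of_sum_range_le (fun n => norm_nonneg _)
        intro N
        calc ∑ n ∈ range N, ‖(catalan n : ℝ) * z ^ n‖
            ≤ ∑ n ∈ range N, (catalan n : ℝ) * (1/4) ^ n := by
              apply Finset.sum_le_sum
              intro n _
              rw [norm_mul, norm_pow]
              have h1 : ‖(catalan n : ℝ)‖ = (catalan n : ℝ) := by
                simp [Nat.abs_cast]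
              rw [h1]
              apply mul_le_mul_of_nonneg_left _ (by positivity)
              · exact pow_le_pow_left₀ (norm_nonneg z) (le_of_lt hz) n
          _ = 2 - 2 * ((2*N).choose N) / 4 ^ N := catalan_partial_sum N
          _ ≤ 2 := by
              have : (0:ℝ) ≤ 2 * ((2*N).choose N) / 4 ^ N := by positivity
              linarith

lemma catalan_key {z : ℝ} (hz : |z| < 1/4) :
    HasSum (fun n => (catalan n : ℝ) * z ^ (n+1)) ((1 - Real.sqrt (1 - 4*z))/2) := by
  set a : ℕ → ℝ := fun n => (catalan n : ℝ) * z ^ n with ha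
  have hs : Summable a := catalan_summable hz
  have hnorm : Summable (fun n => ‖a n‖) := hs.abs
  set S : ℝ := ∑' n, a n with hSdef
  have hS : HasSum a S := hs.hasSum
  -- Cauchy product
  have hC : S * S = ∑' n, ∑ kl ∈ Finset.HasAntidiagonal.antidiagonal n, a kl.1 * a kl.2 :=
    tsum_mul_tsum_eq_tsum_sum_antidiagonal_of_summable_norm hnorm hnorm
  have hinner : ∀ n, ∑ kl ∈ Finset.HasAntidiagonal.antidiagonal n, a kl.1 * a kl.2
      = (catalan (n+1) : ℝ) * z ^ n := by
    intro n
    have : ∀ kl ∈ Finset.HasAntidiagonal.antidiagonal n, a kl.1 * a kl.2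
        = ((catalan kl.1 : ℝ) * (catalan kl.2 : ℝ)) * z ^ n := by
      intro kl hkl
      have hkl' : kl.1 + kl.2 = n := Finset.HasAntidiagonal.mem_antidiagonal.1 hkl
      simp only [ha]
      rw [← hkl', pow_add]
      ring
    rw [Finset.sum_congr rfl this, ← Finset.sum_mul]
    congr 1
    rw [catalan_succ' n]
    push_cast
    rfl
  -- quadratic equation
  have hshift : HasSum (fun n => a (n+1)) (S - 1) := by
    have h0 : HasSum a ((S - 1) + ∑ i ∈ range 1, a i) := by
      have ha0 : a 0 = 1 := by simp [ha]
      simpa [ha0] using hS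
    exact (hasSum_nat_add_iff (f := a) 1).2 h0
  have hmul : HasSum (fun n => z * (catalan (n+1) : ℝ) * z ^ n) (S - 1) := by
    have : (fun n => z * (catalan (n+1) : ℝ) * z ^ n) = fun n => a (n+1) := by
      funext n
      simp only [ha]
      ring
    rw [this]
    exact hshift
  have hsum2 : Summable (fun n => (catalan (n+1) : ℝ) * z ^ n) := by
    have : Summable (fun n => ∑ kl ∈ Finset.HasAntidiagonal.antidiagonal n, a kl.1 * a kl.2) :=
      summable_sum_mul_antidiagonal_of_summable_norm' hnorm hs hnorm hs
    simpa [hinner] using this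
  have hq : z * (S * S) = S - 1 := by
    rw [hC]
    have : ∀ n, ∑ kl ∈ Finset.HasAntidiagonal.antidiagonal n, a kl.1 * a kl.2 = (catalan (n+1) : ℝ) * z ^ n :=
      hinner
    rw [tsum_congr this, ← tsum_mul_left]
    have := hmul.tsum_eq
    rw [← this]
    apply tsum_congr
    intro n
    ring
  -- sign analysis
  have hSabs : |S| ≤ 2 := catalan_tsum_abs_le hz
  have hpos : 0 < 1 - 2 * z * S := by
    have h1 : |2 * z * S| ≤ 4 * |z| := by
      rw [abs_mul, abs_mul]
      have : |(2:ℝ)| = 2 := by norm_num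
      rw [this]
      calc 2 * |z| * |S| ≤ 2 * |z| * 2 := by
            apply mul_le_mul_of_nonneg_left hSabs (by positivity)
        _ = 4 * |z| := by ring
    have h2 : 4 * |z| < 1 := by linarith
    have := abs_lt.1 (lt_of_le_of_lt h1 h2)
    linarith [this.2]
  have hsq : (1 - 2*z*S)^2 = 1 - 4*z := by linear_combination (4*z) * hq
  have hsqrt : Real.sqrt (1 - 4*z) = 1 - 2*z*S := by
    rw [← hsq, Real.sqrt_sq hpos.le]
  have hval : (1 - Real.sqrt (1 - 4*z))/2 = z * S := by
    rw [hsqrt]; ring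
  rw [hval]
  have := hS.mul_left z
  have heq : (fun n => z * a n) = fun n => (catalan n : ℝ) * z ^ (n+1) := by
    funext n
    simp only [ha]
    ring
  rwa [heq] at this


/-- For `0 < q < 1/2` and `p = 1 - q`, the series `∑ n p (pq)^n C_n` converges and equals
`q / (p - q)`. -/
theorem catalan_weighted_sum (q p : ℝ) (hq0 : 0 < q) (hq : q < 1 / 2) (hp : p = 1 - q) :
    HasSum (fun n : ℕ => (n : ℝ) * p * (p * q) ^ n * catalanC n) (q / (p - q)) := by
  have hp0 : 0 < p := by rw [hp]; linarith
  have hpq : 0 < p - q := by rw [hp]; linarith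
  set x : ℝ := p * q with hxdef
  have hx0 : 0 < x := mul_pos hp0 hq0
  have hxlt : x < 1/4 := by
    have h12 : (0:ℝ) < 1/2 - q := by linarith
    have : (0:ℝ) < (1/2 - q)^2 := by positivity
    rw [hxdef, hp]; nlinarith
  have habs : |x| < 1/4 := by rw [abs_of_pos hx0]; exact hxlt
  have hsq14 : 1 - 4*x = (p-q)^2 := by rw [hxdef, hp]; ring
  have hsqrt : Real.sqrt (1 - 4*x) = p - q := by
    rw [hsq14, Real.sqrt_sq hpq.le]
  -- sum of catalan * x^n = 1/p
  have h2 : HasSum (fun n => (catalan n : ℝ) * x ^ n) (1/p) := by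
    have hk := catalan_key habs
    rw [hsqrt] at hk
    have hv : (1 - (p - q))/2 = q := by rw [hp]; ring
    rw [hv] at hk
    have := hk.mul_left x⁻¹
    have heq : (fun n => x⁻¹ * ((catalan n : ℝ) * x ^ (n+1)))
        = fun n => (catalan n : ℝ) * x ^ n := by
      funext n
      rw [pow_succ]
      field_simp
    rw [heq] at this
    have hval : x⁻¹ * q = 1/p := by
      rw [hxdef]
      field_simp
    rwa [hval] at this
  -- derivative part
  set r : ℝ := (x + 1/4)/2 with hrdef
  have hr1 : x < r := by rw [hrdef]; linarith
  have hr2 : r < 1/4 := by rw [hrdef]; linarith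
  have hr0 : 0 < r := by rw [hrdef]; linarith
  have h4r0 : (0:ℝ) ≤ 4*r := by linarith
  have h4r : 4*r < 1 := by linarith
  set t : Set ℝ := Set.Ioo (-r) r with htdef
  have hxt : x ∈ t := ⟨by linarith, hr1⟩
  have h0t : (0:ℝ) ∈ t := ⟨by linarith, hr0⟩
  set u : ℕ → ℝ := fun n => ((n:ℝ)+1) * (4*r)^n with hudef
  have hu : Summable u := by
    have hn : ‖(4*r : ℝ)‖ < 1 := by rw [Real.norm_eq_abs, abs_of_nonneg h4r0]; exact h4r
    have hs1 := summable_pow_mul_geometric_of_norm_lt_one 1 hn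
    have hs2 := summable_geometric_of_lt_one h4r0 h4r
    have := hs1.add hs2
    apply this.congr
    intro n
    simp [hudef]
    ring
  set g : ℕ → ℝ → ℝ := fun n z => (catalan n : ℝ) * z^(n+1) with hgdef
  set g' : ℕ → ℝ → ℝ := fun n y => ((n:ℝ)+1) * (catalan n : ℝ) * y^n with hg'def
  have hg : ∀ n y, y ∈ t → HasDerivAt (g n) (g' n y) y := by
    intro n y _
    have := (hasDerivAt_pow (n+1) y).const_mul ((catalan n : ℝ))
    convert this using 1
    · rfl
    · rfl
    simp [hg'def]
    push_cast
    ring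
  have habs_t : ∀ z ∈ t, |z| < 1/4 := by
    intro z hz
    rw [htdef] at hz
    have := abs_lt.2 ⟨hz.1, hz.2⟩
    linarith
  have hg' : ∀ n y, y ∈ t → ‖g' n y‖ ≤ u n := by
    intro n y hy
    have hyr : |y| ≤ r := by
      rw [htdef] at hy
      exact (abs_lt.2 ⟨hy.1, hy.2⟩).le
    have hc0 : (0:ℝ) ≤ (catalan n : ℝ) := Nat.cast_nonneg _
    rw [hg'def]
    simp only [Real.norm_eq_abs, abs_mul, abs_pow]
    rw [abs_of_nonneg (by positivity : (0:ℝ) ≤ (n:ℝ)+1), abs_of_nonneg hc0]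
    show ((n:ℝ)+1) * (catalan n : ℝ) * |y|^n ≤ ((n:ℝ)+1) * (4*r)^n
    rw [mul_pow, mul_assoc]
    apply mul_le_mul_of_nonneg_left _ (by positivity : (0:ℝ) ≤ (n:ℝ)+1)
    apply mul_le_mul (catalan_le_four_pow n) (pow_le_pow_left₀ (abs_nonneg y) hyr n)
      (by positivity) (by positivity)
  have hg0 : Summable fun n => g n 0 := by
    apply Summable.congr summable_zero
    intro n
    simp [hgdef]
  have HD := hasDerivAt_tsum_of_isPreconnected hu isOpen_Ioo isPreconnected_Ioo
    hg hg' h0t hg0 hxt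
  -- derivative of closed form
  have hi : HasDerivAt (fun z : ℝ => 1 - 4*z) (-4) x := by
    have := ((hasDerivAt_id x).const_mul (4:ℝ)).const_sub (1:ℝ)
    simpa using this
  have hne : (1 - 4*x) ≠ 0 := by rw [hsq14]; positivity
  have hsqrt' := (Real.hasDerivAt_sqrt hne).comp x hi
  have HD2 : HasDerivAt (fun z : ℝ => (1 - Real.sqrt (1 - 4*z))/2) (1/(p-q)) x := by
    have := (hsqrt'.const_sub (1:ℝ)).div_const 2
    convert this using 1
    · rfl
    · rfl
    · rfl
    rw [hsqrt]
    field_simp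
    ring
  -- equality of functions near x
  have hev : (fun z => ∑' n, g n z) =ᶠ[nhds x] (fun z : ℝ => (1 - Real.sqrt (1 - 4*z))/2) := by
    apply Filter.eventuallyEq_of_mem (isOpen_Ioo.mem_nhds hxt)
    intro z hz
    exact (catalan_key (habs_t z hz)).tsum_eq
  have HD3 : HasDerivAt (fun z => ∑' n, g n z) (1/(p-q)) x :=
    HD2.congr_of_eventuallyEq hev
  have htsum : ∑' n, g' n x = 1/(p-q) := HD.unique HD3
  have hsum1 : Summable fun n => g' n x :=
    Summable.of_norm_bounded hu (fun n => hg' n x hxt)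
  have h1 : HasSum (fun n : ℕ => ((n:ℝ)+1) * (catalan n : ℝ) * x^n) (1/(p-q)) := by
    have := hsum1.hasSum
    rw [htsum] at this
    exact this
  -- combine
  have H := (h1.sub h2).mul_left p
  have hfeq : (fun n : ℕ => (n : ℝ) * p * (p * q) ^ n * catalanC n)
      = fun n : ℕ => p * ((((n:ℝ)+1) * (catalan n : ℝ) * x^n) - (catalan n : ℝ) * x^n) := by
    funext n
    rw [catalanC, catalanC_eq', ← hxdef]
    ring
  have hveq : q / (p - q) = p * (1/(p-q) - 1/p) := by
    field_simp
    ring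
  rw [hfeq, hveq]
  exact H
end

section
/- With the Bernoulli-sequence model and the selfish-mining cycle length L, one has μ(L = 1) = p, μ(L = 2) = pq + pq², and for every integer n ≥ 3, μ(L = n) = p^{n−1}·q^n·C_{n−2}, where C_m = (2m)!/(m!·(m+1)!) is the m-th Catalan number. -/
open MeasureTheory ENNReal
open scoped BigOperators Classical

/-- Blocks are labelled by `Bool`: `true` = `S` (selfish/attacker block),
`false` = `H` (honest block). The walk `W k = #{i < k : X_i = S} - #{i < k : X_i = H}`. -/
def walkW (ω : ℕ → Bool) (k : ℕ) : ℤ :=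
  (((Finset.range k).filter fun i => ω i = true).card : ℤ) -
    (((Finset.range k).filter fun i => ω i = false).card : ℤ)

/-- The selfish-mining cycle length `L : Ω → ℕ∞` : `L = 1` if `X_0 = H`; `L = 2` if
`X_0 = S, X_1 = H`; and if `X_0 = X_1 = S`, `L = (σ + 1) / 2` where
`σ = inf {k ≥ 2 : W k = 1}`, with `L = ∞` if no such `k` exists. -/
noncomputable def smL (ω : ℕ → Bool) : ℕ∞ :=
  if ω 0 = false then 1
  else if ω 1 = false then 2
  else if _h : {k : ℕ | 2 ≤ k ∧ walkW ω k = 1}.Nonempty then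
    (((sInf {k : ℕ | 2 ≤ k ∧ walkW ω k = 1} + 1) / 2 : ℕ) : ℕ∞)
  else ⊤

lemma walkW_zero (ω : ℕ → Bool) : walkW ω 0 = 0 := by simp [walkW]

lemma walkW_succ (ω : ℕ → Bool) (k : ℕ) :
    walkW ω (k + 1) = walkW ω k + (if ω k then 1 else -1) := by
  have hk : k ∉ Finset.range k := by simp
  rw [walkW, walkW, Finset.range_add_one, Finset.filter_insert, Finset.filter_insert]
  cases h : ω k <;> simp [h, Finset.card_insert_of_notMem hk] <;> ring

lemma walkW_congr {ω ω' : ℕ → Bool} {k : ℕ} (h : ∀ i < k, ω i = ω' i) :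
    walkW ω k = walkW ω' k := by
  unfold walkW
  have h1 : ∀ b : Bool, (Finset.range k).filter (fun i => ω i = b) =
      (Finset.range k).filter (fun i => ω' i = b) := by
    intro b
    apply Finset.filter_congr
    intro i hi
    simp only [Finset.mem_range] at hi
    rw [h i hi]
  rw [h1 true, h1 false]

lemma walkW_card_add (ω : ℕ → Bool) (k : ℕ) :
    ((Finset.range k).filter fun i => ω i = true).card +
      ((Finset.range k).filter fun i => ω i = false).card = k := by
  have h1 : (Finset.range k).filter (fun i => ω i = false) =
      (Finset.range k).filter (fun i => ¬ ω i = true) := by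
    apply Finset.filter_congr
    intro i _
    simp [Bool.not_eq_true]
  rw [h1, Finset.card_filter_add_card_filter_not, Finset.card_range]

lemma walkW_two {ω : ℕ → Bool} (h0 : ω 0 = true) (h1 : ω 1 = true) : walkW ω 2 = 2 := by
  have e1 : (2 : ℕ) = 1 + 1 := rfl
  rw [e1, walkW_succ, walkW_succ, walkW_zero, h0, h1]
  norm_num

lemma walkW_odd {ω : ℕ → Bool} {k : ℕ} (h : walkW ω k = 1) :
    k = 2 * ((Finset.range k).filter fun i => ω i = false).card + 1 := by
  have := walkW_card_add ω k
  unfold walkW at h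
  omega

lemma smL_eq_iff (ω : ℕ → Bool) (n : ℕ) (hn : 2 ≤ n) :
    smL ω = (n : ℕ∞) ↔
      (ω 0 = true ∧ ω 1 = false ∧ n = 2) ∨
      (ω 0 = true ∧ ω 1 = true ∧
        (∀ k, 2 ≤ k → k < 2 * n - 1 → walkW ω k ≠ 1) ∧ walkW ω (2 * n - 1) = 1) := by
  unfold smL
  cases h0 : ω 0 with
  | false =>
    simp only [h0, if_true]
    have : ((1 : ℕ) : ℕ∞) ≠ (n : ℕ∞) := by exact_mod_cast (by omega : (1:ℕ) ≠ n)
    simp only [Nat.cast_one] at this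
    simp [this, h0]
  | true =>
    simp only [h0, Bool.true_eq_false, if_false]
    cases h1 : ω 1 with
    | false =>
      simp only [h1, if_true]
      have : ((2 : ℕ∞) = (n : ℕ∞)) ↔ n = 2 := by
        rw [show (2 : ℕ∞) = ((2:ℕ) : ℕ∞) by norm_cast, Nat.cast_inj]; omega
      simp [this, h1]
    | true =>
      simp only [h1, Bool.true_eq_false, if_false]
      have hW2 : walkW ω 2 = 2 := walkW_two h0 h1
      split
      case isTrue hne =>
        set σ := sInf {k : ℕ | 2 ≤ k ∧ walkW ω k = 1} with hσdef
        have hσ : 2 ≤ σ ∧ walkW ω σ = 1 := Nat.sInf_mem hne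
        have hσ2 : σ ≠ 2 := by
          intro h; rw [h] at hσ; rw [hW2] at hσ; exact absurd hσ.2 (by norm_num)
        have hodd := walkW_odd hσ.2
        constructor
        · intro h
          have hnn : (σ + 1) / 2 = n := by exact_mod_cast h
          have hσval : σ = 2 * n - 1 := by omega
          refine Or.inr ⟨trivial, trivial, ?_, by rw [← hσval]; exact hσ.2⟩
          intro k hk2 hklt hk1
          have : σ ≤ k := Nat.sInf_le ⟨hk2, hk1⟩
          omega
        · rintro (⟨-, h, -⟩ | ⟨-, -, hlt, hval⟩)
          · exact h.elim
          · have hle : σ ≤ 2 * n - 1 := Nat.sInf_le ⟨by omega, hval⟩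
            have : σ = 2 * n - 1 := by
              by_contra hne'
              exact hlt σ hσ.1 (by omega) hσ.2
            rw [this]
            have : (2 * n - 1 + 1) / 2 = n := by omega
            rw [this]
      case isFalse hne =>
        constructor
        · intro h; exact absurd h (by simp)
        · rintro (⟨-, h, -⟩ | ⟨-, -, -, hval⟩)
          · exact h.elim
          · exact absurd ⟨by omega, hval⟩ (fun hmem => hne ⟨_, hmem⟩)

lemma smL_eq_one_iff (ω : ℕ → Bool) : smL ω = 1 ↔ ω 0 = false := by
  unfold smL
  cases h0 : ω 0 with
  | false => simp [h0]
  | true =>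
    simp only [h0, Bool.true_eq_false, if_false]
    cases h1 : ω 1 with
    | false => simp [h1]
    | true =>
      simp only [h1, Bool.true_eq_false, if_false]
      split
      case isTrue hne =>
        have hσ : 2 ≤ sInf {k : ℕ | 2 ≤ k ∧ walkW ω k = 1} ∧
            walkW ω (sInf {k : ℕ | 2 ≤ k ∧ walkW ω k = 1}) = 1 := Nat.sInf_mem hne
        have hW2 : walkW ω 2 = 2 := walkW_two h0 h1
        have hσ2 : sInf {k : ℕ | 2 ≤ k ∧ walkW ω k = 1} ≠ 2 := by
          intro h; rw [h, hW2] at hσ; exact absurd hσ.2 (by norm_num)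
        have h3 : 3 ≤ sInf {k : ℕ | 2 ≤ k ∧ walkW ω k = 1} := by omega
        have : ((sInf {k : ℕ | 2 ≤ k ∧ walkW ω k = 1} + 1) / 2 : ℕ) ≠ 1 := by omega
        simp only [Ne, ← Nat.cast_one (R := ℕ∞), Nat.cast_inj] at this ⊢
        simp [this]
      case isFalse => simp

def extW {N : ℕ} (w : Fin N → Bool) : ℕ → Bool := fun i => if h : i < N then w ⟨i, h⟩ else false

lemma extW_val {N : ℕ} (w : Fin N → Bool) (i : Fin N) : extW w (i : ℕ) = w i := by
  simp [extW]

lemma cylinder_measurable {N : ℕ} (w : Fin N → Bool) :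
    MeasurableSet {ω : ℕ → Bool | ∀ i : Fin N, ω i = w i} := by
  have h : {ω : ℕ → Bool | ∀ i : Fin N, ω i = w i} =
      ⋂ i : Fin N, (fun ω : ℕ → Bool => ω (i : ℕ)) ⁻¹' {w i} := by
    ext ω; simp [Set.mem_iInter]
  rw [h]
  exact MeasurableSet.iInter fun i => (measurable_pi_apply _) (measurableSet_singleton _)

lemma measure_restrict_mem (μ : Measure (ℕ → Bool)) (q' p' : ℝ≥0∞)
    (hμ : ∀ (n : ℕ) (w : Fin n → Bool),
      μ {ω | ∀ i : Fin n, ω i = w i} = ∏ i : Fin n, (if w i then q' else p'))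
    (N : ℕ) (S : Finset (Fin N → Bool)) :
    μ {ω | (fun i : Fin N => ω (i : ℕ)) ∈ S} =
      ∑ w ∈ S, ∏ i : Fin N, (if w i then q' else p') := by
  have hset : {ω : ℕ → Bool | (fun i : Fin N => ω (i : ℕ)) ∈ S} =
      ⋃ w ∈ S, {ω | ∀ i : Fin N, ω i = w i} := by
    ext ω
    simp only [Set.mem_setOf_eq, Set.mem_iUnion]
    constructor
    · intro h; exact ⟨_, h, fun i => rfl⟩
    · rintro ⟨w, hw, h⟩
      have hfe : (fun i : Fin N => ω (i : ℕ)) = w := funext h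
      rw [hfe]; exact hw
  rw [hset, measure_biUnion_finset ?_ (fun w _ => cylinder_measurable w)]
  · exact Finset.sum_congr rfl (fun w _ => hμ N w)
  · intro w hw w' hw' hne
    refine Set.disjoint_left.mpr ?_
    intro ω h h'
    exact hne (funext fun i => (h i).symm.trans (h' i))

lemma prod_ite_count {M : Type*} [CommMonoid M] (a b : M) (ω : ℕ → Bool) (N : ℕ) :
    ∏ i ∈ Finset.range N, (if ω i then a else b) =
      a ^ ((Finset.range N).filter fun i => ω i = true).card *
      b ^ ((Finset.range N).filter fun i => ω i = false).card := by
  rw [Finset.prod_ite (fun _ => a) (fun _ => b), Finset.prod_const, Finset.prod_const]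
  congr 2
  refine congrArg Finset.card (Finset.filter_congr ?_)
  intro i _
  simp [Bool.not_eq_true]

lemma prod_fin_eq (q' p' : ℝ≥0∞) {N : ℕ} (w : Fin N → Bool) :
    ∏ i : Fin N, (if w i then q' else p') =
      q' ^ ((Finset.range N).filter fun i => extW w i = true).card *
      p' ^ ((Finset.range N).filter fun i => extW w i = false).card := by
  rw [← prod_ite_count, ← Fin.prod_univ_eq_prod_range (fun i => if extW w i then q' else p') N]
  exact Finset.prod_congr rfl fun i _ => by rw [extW_val]

open DyckStep in
lemma walk_count {ω : ℕ → Bool} (h0 : ω 0 = true) (h1 : ω 1 = true) (s : List DyckStep)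
    (hs : ∀ (i : ℕ) (h : i < s.length), (s.get ⟨i, h⟩ = U ↔ ω (i + 2) = true)) :
    ∀ k, k ≤ s.length →
      walkW ω (k + 2) = 2 + ((s.take k).count U : ℤ) - ((s.take k).count D : ℤ) := by
  intro k
  induction k with
  | zero =>
    intro _
    simp only [List.take_zero, List.count_nil]
    rw [show (0:ℕ)+2 = 0+1+1 from rfl, walkW_succ, walkW_succ, walkW_zero, h0, h1]
    norm_num
  | succ j ih =>
    intro hle
    have hj : j < s.length := by omega
    have hstep : walkW ω (j + 1 + 2) = walkW ω (j + 2) + (if ω (j + 2) then 1 else -1) := by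
      rw [show j + 1 + 2 = (j + 2) + 1 by omega]; exact walkW_succ ω (j + 2)
    rw [hstep, ih (by omega), ← List.take_concat_get' s j hj]
    rcases (s.get ⟨j, hj⟩).dichotomy with hU | hD
    · have hωj : ω (j + 2) = true := (hs j hj).mp hU
      have hg : s[j] = U := hU
      simp only [List.count_append, List.count_singleton', hg, hωj, if_true]
      norm_num; push_cast; ring
    · have hωj : ω (j + 2) = false := by
        have : ¬ (s.get ⟨j, hj⟩ = U) := by rw [hD]; simp
        have := (not_iff_not.mpr (hs j hj)).mp this
        simpa using this
      have hg : s[j] = D := hD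
      simp only [List.count_append, List.count_singleton', hg, hωj, if_false]
      norm_num; push_cast; ring

lemma walk_ge_two {ω : ℕ → Bool} {K : ℕ} (hW2 : walkW ω 2 = 2)
    (hne : ∀ k, 2 ≤ k → k < K → walkW ω k ≠ 1) :
    ∀ k, 2 ≤ k → k < K → 2 ≤ walkW ω k := by
  intro k
  induction k with
  | zero => omega
  | succ j ih =>
    intro h2 hK
    rcases Nat.lt_or_ge j 2 with hj | hj
    · have hj1 : j + 1 = 2 := by omega
      rw [hj1]; exact le_of_eq hW2.symm
    · have hW : 2 ≤ walkW ω j := ih hj (by omega)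
      have hstep := walkW_succ ω j
      have hne' := hne (j + 1) h2 hK
      cases hb : ω j <;> rw [hb] at hstep <;> simp at hstep <;> omega

/-- The walk condition characterizing `smL = m + 2` on the first `2m+3` coordinates. -/
def walkCond (m : ℕ) (w : Fin (2 * m + 3) → Bool) : Prop :=
  extW w 0 = true ∧ extW w 1 = true ∧
    (∀ k, 2 ≤ k → k < 2 * m + 3 → walkW (extW w) k ≠ 1) ∧ walkW (extW w) (2 * m + 3) = 1

lemma walkCond_end {m : ℕ} {w : Fin (2 * m + 3) → Bool} (hw : walkCond m w) :
    walkW (extW w) (2 * m + 2) = 2 ∧ extW w (2 * m + 2) = false := by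
  obtain ⟨h0, h1, hlt, hval⟩ := hw
  have hge := walk_ge_two (walkW_two h0 h1) hlt (2 * m + 2) (by omega) (by omega)
  generalize hωe : extW w = ω at *
  have hstep : walkW ω (2 * m + 3) =
      walkW ω (2 * m + 2) + (if ω (2 * m + 2) then 1 else -1) := by
    rw [show 2 * m + 3 = (2 * m + 2) + 1 by omega]; exact walkW_succ _ _
  rw [hval] at hstep
  cases hb : ω (2 * m + 2) with
  | true => exfalso; rw [hb] at hstep; simp at hstep; omega
  | false => rw [hb] at hstep; simp at hstep; exact ⟨by omega, rfl⟩

open DyckStep in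
lemma ofFn_walk_count {m : ℕ} (w : Fin (2 * m + 3) → Bool)
    (h0 : extW w 0 = true) (h1 : extW w 1 = true) (k : ℕ) (hk : k ≤ 2 * m) :
    walkW (extW w) (k + 2) =
      2 + (((List.ofFn fun j : Fin (2 * m) => if extW w ((j : ℕ) + 2) then U else D).take k).count U : ℤ)
        - (((List.ofFn fun j : Fin (2 * m) => if extW w ((j : ℕ) + 2) then U else D).take k).count D : ℤ) := by
  refine walk_count h0 h1 _ ?_ k (by simpa using hk)
  intro i h
  rw [List.get_ofFn]
  simp only [Fin.coe_cast]
  rcases Bool.dichotomy (extW w (i + 2)) with hx | hx <;> simp [hx]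

open DyckStep in
lemma toDyck_count_le {m : ℕ} (w : Fin (2 * m + 3) → Bool) (hw : walkCond m w) (i : ℕ) :
    (((List.ofFn fun j : Fin (2 * m) => if extW w ((j : ℕ) + 2) then U else D).take i).count D) ≤
      (((List.ofFn fun j : Fin (2 * m) => if extW w ((j : ℕ) + 2) then U else D).take i).count U) := by
  obtain ⟨h0, h1, hlt, hval⟩ := hw
  rcases le_or_gt i (2 * m) with hi | hi
  · have hc := ofFn_walk_count w h0 h1 i hi
    rcases Nat.eq_zero_or_pos i with rfl | hipos
    · simp
    · have hge := walk_ge_two (walkW_two h0 h1) hlt (i + 2) (by omega) (by omega)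
      omega
  · have htake : (List.ofFn fun j : Fin (2 * m) => if extW w ((j : ℕ) + 2) then U else D).take i
        = List.ofFn fun j : Fin (2 * m) => if extW w ((j : ℕ) + 2) then U else D :=
      List.take_of_length_le (by simpa using hi.le)
    rw [htake]
    have hc := ofFn_walk_count w h0 h1 (2 * m) le_rfl
    have htake2 : (List.ofFn fun j : Fin (2 * m) => if extW w ((j : ℕ) + 2) then U else D).take (2 * m)
        = List.ofFn fun j : Fin (2 * m) => if extW w ((j : ℕ) + 2) then U else D :=
      List.take_of_length_le (by simp)
    rw [htake2] at hc
    have hend := (walkCond_end ⟨h0, h1, hlt, hval⟩).1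
    omega

open DyckStep in
lemma toDyck_count_eq {m : ℕ} (w : Fin (2 * m + 3) → Bool) (hw : walkCond m w) :
    ((List.ofFn fun j : Fin (2 * m) => if extW w ((j : ℕ) + 2) then U else D).count U) =
      ((List.ofFn fun j : Fin (2 * m) => if extW w ((j : ℕ) + 2) then U else D).count D) := by
  obtain ⟨h0, h1, hlt, hval⟩ := hw
  have hc := ofFn_walk_count w h0 h1 (2 * m) le_rfl
  have htake2 : (List.ofFn fun j : Fin (2 * m) => if extW w ((j : ℕ) + 2) then U else D).take (2 * m)
      = List.ofFn fun j : Fin (2 * m) => if extW w ((j : ℕ) + 2) then U else D :=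
    List.take_of_length_le (by simp)
  rw [htake2] at hc
  have hend := (walkCond_end ⟨h0, h1, hlt, hval⟩).1
  omega

open DyckStep in
/-- The Dyck word associated to a walk-condition word. -/
noncomputable def toDyck (m : ℕ) (w : Fin (2 * m + 3) → Bool) (hw : walkCond m w) : DyckWord :=
  ⟨List.ofFn fun j : Fin (2 * m) => if extW w ((j : ℕ) + 2) then U else D,
    toDyck_count_eq w hw, toDyck_count_le w hw⟩

lemma toDyck_semilength {m : ℕ} (w : Fin (2 * m + 3) → Bool) (hw : walkCond m w) :
    (toDyck m w hw).semilength = m := by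
  have h := (toDyck m w hw).two_mul_semilength_eq_length
  have : (toDyck m w hw).toList.length = 2 * m := by simp [toDyck]
  omega

open DyckStep in
/-- The boolean sequence associated to a Dyck word. -/
def ofDyckFun (d : DyckWord) : ℕ → Bool
  | 0 => true
  | 1 => true
  | (j + 2) => if h : j < d.toList.length then (d.toList.get ⟨j, h⟩ == U) else false

def ofDyck (m : ℕ) (d : DyckWord) : Fin (2 * m + 3) → Bool := fun i => ofDyckFun d (i : ℕ)

lemma dyck_length {m : ℕ} {d : DyckWord} (hd : d.semilength = m) : d.toList.length = 2 * m := by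
  have := d.two_mul_semilength_eq_length
  omega

open DyckStep in
lemma extW_ofDyck (m : ℕ) (d : DyckWord) (hd : d.semilength = m) :
    extW (ofDyck m d) = ofDyckFun d := by
  have hlen := dyck_length hd
  funext i
  unfold extW
  split
  · rfl
  · rename_i hni
    obtain ⟨j, rfl⟩ : ∃ j, i = j + 2 := ⟨i - 2, by omega⟩
    show false = (if h : j < d.toList.length then (d.toList.get ⟨j, h⟩ == U) else false)
    rw [dif_neg (by omega)]

open DyckStep in
lemma ofDyckFun_get {d : DyckWord} (i : ℕ) (h : i < d.toList.length) :
    ofDyckFun d (i + 2) = (d.toList.get ⟨i, h⟩ == U) := by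
  show (if h' : i < d.toList.length then (d.toList.get ⟨i, h'⟩ == U) else false) = _
  rw [dif_pos h]

open DyckStep in
lemma ofDyck_walkCond (m : ℕ) (d : DyckWord) (hd : d.semilength = m) :
    walkCond m (ofDyck m d) := by
  have hlen := dyck_length hd
  have hext := extW_ofDyck m d hd
  have hs : ∀ (i : ℕ) (h : i < d.toList.length),
      (d.toList.get ⟨i, h⟩ = U ↔ ofDyckFun d (i + 2) = true) := by
    intro i h
    rw [ofDyckFun_get i h]
    simp
  have hcount := walk_count (ω := ofDyckFun d) rfl rfl d.toList hs
  refine ⟨by rw [hext]; rfl, by rw [hext]; rfl, ?_, ?_⟩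
  · intro k h2 hltk
    obtain ⟨j, rfl⟩ : ∃ j, k = j + 2 := ⟨k - 2, by omega⟩
    rw [hext]
    have hc := hcount j (by omega)
    have hle := d.count_D_le_count_U j
    omega
  · rw [hext]
    have hstep : walkW (ofDyckFun d) (2 * m + 3) =
        walkW (ofDyckFun d) (2 * m + 2) + (if ofDyckFun d (2 * m + 2) then 1 else -1) := by
      rw [show 2 * m + 3 = (2 * m + 2) + 1 by omega]; exact walkW_succ _ _
    have h2m2 : ofDyckFun d (2 * m + 2) = false := by
      show (if h : 2 * m < d.toList.length then (d.toList.get ⟨2 * m, h⟩ == U) else false) = false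
      rw [dif_neg (by omega)]
    have hc := hcount (2 * m) (by omega)
    rw [List.take_of_length_le (by omega)] at hc
    have hceq := d.count_U_eq_count_D
    rw [hstep, h2m2]
    simp only [Bool.false_eq_true, if_false]
    omega

open DyckStep in
lemma left_inv_aux {m : ℕ} (w : Fin (2 * m + 3) → Bool) (hw : walkCond m w) :
    ofDyck m (toDyck m w hw) = w := by
  have hlen : (toDyck m w hw).toList.length = 2 * m := by simp [toDyck]
  funext i
  rcases i with ⟨iv, hiv⟩
  show ofDyckFun (toDyck m w hw) iv = w ⟨iv, hiv⟩
  have hvw : extW w iv = w ⟨iv, hiv⟩ := extW_val w ⟨iv, hiv⟩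
  match iv, hiv with
  | 0, hiv => rw [← hvw]; exact hw.1.symm
  | 1, hiv => rw [← hvw]; exact hw.2.1.symm
  | (j + 2), hiv =>
    rcases lt_or_ge j (2 * m) with hj | hj
    · rw [ofDyckFun_get j (by omega)]
      have hget : (toDyck m w hw).toList.get ⟨j, by omega⟩
          = if extW w (j + 2) then U else D := by
        show (List.ofFn fun j : Fin (2 * m) => if extW w ((j : ℕ) + 2) then U else D).get _ = _
        refine (List.getElem_ofFn ..).trans ?_
        simp
      rw [hget, ← hvw]
      rcases Bool.dichotomy (extW w (j + 2)) with hx | hx <;> simp [hx]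
    · have hj' : j = 2 * m := by omega
      subst hj'
      have hend := (walkCond_end hw).2
      rw [← hvw, hend]
      show (if h : 2 * m < (toDyck m w hw).toList.length then _ else false) = false
      rw [dif_neg (by omega)]

open DyckStep in
lemma right_inv_aux {m : ℕ} (d : DyckWord) (hd : d.semilength = m) :
    toDyck m (ofDyck m d) (ofDyck_walkCond m d hd) = d := by
  have hlen := dyck_length hd
  apply DyckWord.ext
  show (List.ofFn fun j : Fin (2 * m) => if extW (ofDyck m d) ((j : ℕ) + 2) then U else D)
      = d.toList
  rw [extW_ofDyck m d hd]
  apply List.ext_get (by simpa using hlen.symm)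
  intro i h1 h2
  rw [List.get_ofFn]
  have hi : i < d.toList.length := h2
  simp only [Fin.coe_cast]
  have hofd : ofDyckFun d (i + 2) = (d.toList.get ⟨i, hi⟩ == U) := ofDyckFun_get i hi
  rcases (d.toList.get ⟨i, hi⟩).dichotomy with hU | hD
  · rw [hU] at hofd
    simp at hofd
    simp only [hofd, if_true]
    exact hU.symm
  · rw [hD] at hofd
    rw [show (D == U) = false from rfl] at hofd
    simp only [hofd, Bool.false_eq_true, if_false]
    exact hD.symm

noncomputable def walkEquiv (m : ℕ) :
    {w : Fin (2 * m + 3) → Bool // walkCond m w} ≃ {d : DyckWord // d.semilength = m} where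
  toFun x := ⟨toDyck m x.1 x.2, toDyck_semilength x.1 x.2⟩
  invFun x := ⟨ofDyck m x.1, ofDyck_walkCond m x.1 x.2⟩
  left_inv x := Subtype.ext (left_inv_aux x.1 x.2)
  right_inv x := Subtype.ext (right_inv_aux x.1 x.2)

lemma card_walkCond (m : ℕ) :
    (Finset.univ.filter fun w : Fin (2 * m + 3) → Bool => walkCond m w).card = catalan m := by
  rw [← DyckWord.card_dyckWord_semilength_eq_catalan m, ← Fintype.card_congr (walkEquiv m)]
  rw [Fintype.card_subtype]

lemma catalanC_eq (m : ℕ) : catalanC m = (catalan m : ℝ) := by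
  have key : catalan m * (m.factorial * (m + 1).factorial) = (2 * m).factorial := by
    have h1 := succ_mul_catalan_eq_centralBinom m
    have h2 : (2 * m).choose m * m.factorial * (2 * m - m).factorial = (2 * m).factorial :=
      Nat.choose_mul_factorial_mul_factorial (by omega)
    have h3 : 2 * m - m = m := by omega
    rw [h3] at h2
    calc catalan m * (m.factorial * (m + 1).factorial)
        = ((m + 1) * catalan m) * m.factorial * m.factorial := by
          rw [Nat.factorial_succ]; ring
      _ = m.centralBinom * m.factorial * m.factorial := by rw [h1]
      _ = (2 * m).factorial := by rw [Nat.centralBinom]; rw [mul_assoc] at h2 ⊢; exact h2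
  have hf1 : ((m.factorial : ℝ)) ≠ 0 := by positivity
  have hf2 : (((m + 1).factorial : ℝ)) ≠ 0 := by positivity
  unfold catalanC
  rw [div_eq_iff (by positivity)]
  rw [← key]
  push_cast
  ring

/-- Distribution of the selfish-mining cycle length: `μ(L = 1) = p`,
`μ(L = 2) = pq + pq²`, and for `n ≥ 3`, `μ(L = n) = p^(n-1) q^n C_(n-2)`. -/
theorem smL_distribution (q p : ℝ) (hq0 : 0 < q) (hq : q < 1 / 2) (hp : p = 1 - q)
    (μ : Measure (ℕ → Bool)) [IsProbabilityMeasure μ]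
    (hμ : ∀ (n : ℕ) (w : Fin n → Bool),
      μ {ω | ∀ i : Fin n, ω i = w i} =
        ∏ i : Fin n, (if w i then ENNReal.ofReal q else ENNReal.ofReal p)) :
    μ {ω | smL ω = 1} = ENNReal.ofReal p ∧
    μ {ω | smL ω = 2} = ENNReal.ofReal (p * q + p * q ^ 2) ∧
    ∀ n : ℕ, 3 ≤ n →
      μ {ω | smL ω = (n : ℕ∞)} =
        ENNReal.ofReal (p ^ (n - 1) * q ^ n * catalanC (n - 2)) := by

  have hp0 : 0 ≤ p := by rw [hp]; linarith
  have hq0' : 0 ≤ q := hq0.le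
  refine ⟨?_, ?_, ?_⟩
  · -- L = 1
    have hset : {ω : ℕ → Bool | smL ω = 1} =
        {ω | ∀ i : Fin 1, ω i = (fun _ => false) i} := by
      ext ω
      simp only [Set.mem_setOf_eq, smL_eq_one_iff]
      constructor
      · intro h i
        match i with
        | ⟨0, _⟩ => exact h
      · intro h
        exact h ⟨0, by omega⟩
    rw [hset, hμ 1]
    simp
  · -- L = 2
    have hset : {ω : ℕ → Bool | smL ω = 2} =
        {ω | ∀ i : Fin 2, ω i = (fun j : Fin 2 => ((j : ℕ) == 0)) i} ∪
          {ω | ∀ i : Fin 3, ω i = (fun j : Fin 3 => ((j : ℕ) != 2)) i} := by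
      ext ω
      have h2c : ((2 : ℕ) : ℕ∞) = 2 := by norm_cast
      simp only [Set.mem_setOf_eq, Set.mem_union]
      rw [← h2c, smL_eq_iff ω 2 le_rfl]
      have hstep : walkW ω (2 * 2 - 1) = walkW ω 2 + (if ω 2 then 1 else -1) :=
        walkW_succ ω 2
      constructor
      · rintro (⟨h0, h1, -⟩ | ⟨h0, h1, hlt, hval⟩)
        · left
          intro i
          match i with
          | ⟨0, _⟩ => exact h0
          | ⟨1, _⟩ => exact h1
        · right
          have hW2 := walkW_two h0 h1
          have h2' : ω 2 = false := by
            rcases Bool.dichotomy (ω 2) with hb | hb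
            · exact hb
            · rw [hb] at hstep; simp only [if_true] at hstep; omega
          intro i
          match i with
          | ⟨0, _⟩ => exact h0
          | ⟨1, _⟩ => exact h1
          | ⟨2, _⟩ => exact h2'
      · rintro (h | h)
        · refine Or.inl ⟨h ⟨0, by norm_num⟩, by simpa using h ⟨1, by norm_num⟩, rfl⟩
        · have h0 : ω 0 = true := by simpa using h ⟨0, by omega⟩
          have h1 : ω 1 = true := by simpa using h ⟨1, by omega⟩
          have h2' : ω 2 = false := by simpa using h ⟨2, by omega⟩
          have hW2 := walkW_two h0 h1
          refine Or.inr ⟨h0, h1, ?_, ?_⟩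
          · intro k hk1 hk2
            have : k = 2 := by omega
            subst this
            rw [hW2]
            norm_num
          · rw [hstep, hW2, h2']
            norm_num
    rw [hset, measure_union ?_ (cylinder_measurable _), hμ 2, hμ 3]
    · have e1 : ∏ i : Fin 2, (if (fun j : Fin 2 => ((j : ℕ) == 0)) i then ENNReal.ofReal q else ENNReal.ofReal p)
          = ENNReal.ofReal q * ENNReal.ofReal p := by
        rw [Fin.prod_univ_two]
        norm_num
      have e2 : ∏ i : Fin 3, (if (fun j : Fin 3 => ((j : ℕ) != 2)) i then ENNReal.ofReal q else ENNReal.ofReal p)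
          = ENNReal.ofReal q * (ENNReal.ofReal q * ENNReal.ofReal p) := by
        rw [Fin.prod_univ_three]
        norm_num [mul_assoc]
      rw [e1, e2]
      simp only [← ENNReal.ofReal_mul hq0']
      rw [← ENNReal.ofReal_add (by positivity) (by positivity)]
      congr 1
      ring
    · refine Set.disjoint_left.mpr ?_
      intro ω hA hB
      have h1 : ω 1 = false := by simpa using hA ⟨1, by norm_num⟩
      have h2 : ω 1 = true := hB ⟨1, by norm_num⟩
      rw [h1] at h2
      exact absurd h2 (by simp)
  · -- L = n, n ≥ 3
    intro n hn
    obtain ⟨m', rfl⟩ : ∃ m', n = m' + 3 := ⟨n - 3, by omega⟩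
    set m := m' + 1 with hm
    have hset : {ω : ℕ → Bool | smL ω = ((m' + 3 : ℕ) : ℕ∞)} =
        {ω | (fun i : Fin (2 * m + 3) => ω (i : ℕ)) ∈
          Finset.univ.filter fun w => walkCond m w} := by
      ext ω
      simp only [Set.mem_setOf_eq, Finset.mem_filter, Finset.mem_univ, true_and]
      rw [smL_eq_iff ω (m' + 3) (by omega)]
      have hag : ∀ k, k ≤ 2 * m + 3 →
          walkW (extW fun i : Fin (2 * m + 3) => ω (i : ℕ)) k = walkW ω k := by
        intro k hk
        apply walkW_congr
        intro i hi
        show extW _ i = ω i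
        unfold extW
        rw [dif_pos (by omega)]
      have h0e : extW (fun i : Fin (2 * m + 3) => ω (i : ℕ)) 0 = ω 0 := by
        unfold extW; rw [dif_pos (by omega)]
      have h1e : extW (fun i : Fin (2 * m + 3) => ω (i : ℕ)) 1 = ω 1 := by
        unfold extW; rw [dif_pos (by omega)]
      have harith : 2 * (m' + 3) - 1 = 2 * m + 3 := by omega
      constructor
      · rintro (⟨-, -, h⟩ | ⟨h0, h1, hlt, hval⟩)
        · exact absurd h (by omega)
        · refine ⟨by rw [h0e]; exact h0, by rw [h1e]; exact h1, ?_, ?_⟩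
          · intro k h2 hk
            rw [hag k (by omega)]
            exact hlt k h2 (by omega)
          · rw [hag _ le_rfl, ← harith]
            exact hval
      · rintro ⟨h0, h1, hlt, hval⟩
        refine Or.inr ⟨by rw [← h0e]; exact h0, by rw [← h1e]; exact h1, ?_, ?_⟩
        · intro k h2 hk
          rw [← hag k (by omega)]
          exact hlt k h2 (by omega)
        · rw [harith, ← hag _ le_rfl]
          exact hval
    rw [hset, measure_restrict_mem μ _ _ hμ _ _]
    have hterm : ∀ w ∈ Finset.univ.filter (fun w : Fin (2 * m + 3) → Bool => walkCond m w),
        (∏ i : Fin (2 * m + 3), (if w i then ENNReal.ofReal q else ENNReal.ofReal p))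
          = ENNReal.ofReal q ^ (m + 2) * ENNReal.ofReal p ^ (m + 1) := by
      intro w hw
      rw [Finset.mem_filter] at hw
      obtain ⟨-, -, -, -, hval⟩ := hw
      have hadd := walkW_card_add (extW w) (2 * m + 3)
      unfold walkW at hval
      have hT : ((Finset.range (2 * m + 3)).filter fun i => extW w i = true).card = m + 2 := by
        omega
      have hF : ((Finset.range (2 * m + 3)).filter fun i => extW w i = false).card = m + 1 := by
        omega
      rw [prod_fin_eq, hT, hF]
    rw [Finset.sum_congr rfl hterm, Finset.sum_const, card_walkCond m]
    rw [show m' + 3 - 1 = m + 1 from by omega, show m' + 3 - 2 = m from by omega,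
      show m' + 3 = m + 2 from by omega, catalanC_eq, nsmul_eq_mul]
    rw [← ENNReal.ofReal_pow hq0', ← ENNReal.ofReal_pow hp0,
      ← ENNReal.ofReal_mul (by positivity), ← ENNReal.ofReal_natCast (catalan m),
      ← ENNReal.ofReal_mul (by positivity)]
    congr 1
    ring
end
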